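/- Assume γψ>1. Define G(d,ν) := δ^{θ/γ} · (γ/(1−γ)) · d^{(γ−1)/γ} · ((δθ−ν)/(θ−1))^{(1−θ)/γ} for d>0 and ν ∈ ℝ with (δθ−ν)/(θ−1)>0. Then for every d>0 and every real v with (1−γ)v>0, the supremum g(d,v) := sup { G(d,ν) − ν·v : ν ∈ ℝ, (δθ−ν)/(θ−1)>0 } is attained and equals δ^ψ · (d^{1−ψ}/(ψ−1)) · ((1−γ)v)^{1−γψ/θ} − δθv. -/

import Mathlib

open Real

set_option maxHeartbeats 1000000

private lemma bern_le {t p : ℝ} (ht : 0 < t) (hp0 : 0 ≤ p) (hp1 : p ≤ 1) :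
    t ^ p ≤ 1 + p * (t - 1) := by
  have h := rpow_one_add_le_one_add_mul_self (s := t - 1) (by linarith) hp0 hp1
  have h2 : 1 + (t - 1) = t := by ring
  rwa [h2] at h

private lemma bern_ge {t p : ℝ} (ht : 0 < t) (hp : p ≤ 0 ∨ 1 ≤ p) :
    1 + p * (t - 1) ≤ t ^ p := by
  rcases hp with hp | hp
  · have hpos : 0 < t ^ p := Real.rpow_pos_of_pos ht p
    have hlog : Real.log t ≤ t - 1 := Real.log_le_sub_one_of_pos ht
    have h1 : p * (t - 1) ≤ p * Real.log t := by nlinarith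
    have h2 : p * Real.log t + 1 ≤ Real.exp (p * Real.log t) := by
      linarith [Real.add_one_le_exp (p * Real.log t)]
    have h3 : t ^ p = Real.exp (p * Real.log t) := by
      rw [Real.rpow_def_of_pos ht, mul_comm]
    linarith [h3 ▸ le_refl (t ^ p)]
  · have h := one_add_mul_self_le_rpow_one_add (s := t - 1) (by linarith) hp
    have h2 : 1 + (t - 1) = t := by ring
    rwa [h2] at h

/-- Assume `γψ > 1`. For every `d > 0` and every `v` with `(1−γ)v > 0`, the supremum
`g(d,v) = sup { G(d,ν) − νv : (δθ−ν)/(θ−1) > 0 }` is attained and equals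
`δ^ψ (d^{1−ψ}/(ψ−1)) ((1−γ)v)^{1−γψ/θ} − δθv`. -/
theorem epsteinZin_dual_aggregator_isGreatest
    (δ γ ψ θ : ℝ) (hδ : 0 < δ) (hγ : 0 < γ) (hγ1 : γ ≠ 1)
    (hψ : 0 < ψ) (hψ1 : ψ ≠ 1) (hθ : θ = (1 - γ) / (1 - 1 / ψ))
    (hγψ : 1 < γ * ψ)
    (d v : ℝ) (hd : 0 < d) (hv : 0 < (1 - γ) * v) :
    IsGreatest
      {y : ℝ | ∃ ν : ℝ, 0 < (δ * θ - ν) / (θ - 1) ∧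
        y = δ ^ (θ / γ) * (γ / (1 - γ)) * d ^ ((γ - 1) / γ)
              * ((δ * θ - ν) / (θ - 1)) ^ ((1 - θ) / γ) - ν * v}
      (δ ^ ψ * (d ^ (1 - ψ) / (ψ - 1)) * ((1 - γ) * v) ^ (1 - γ * ψ / θ)
        - δ * θ * v) := by
  have hψ0 : ψ ≠ 0 := ne_of_gt hψ
  have hγ0 : γ ≠ 0 := ne_of_gt hγ
  have hψm : ψ - 1 ≠ 0 := sub_ne_zero.mpr hψ1
  have hγm : γ - 1 ≠ 0 := sub_ne_zero.mpr hγ1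
  have h1γ : 1 - γ ≠ 0 := sub_ne_zero.mpr (Ne.symm hγ1)
  have h1ψ : 1 - 1 / ψ ≠ 0 := by
    have : 1 - 1 / ψ = (ψ - 1) / ψ := by field_simp
    rw [this]
    exact div_ne_zero hψm hψ0
  have hθm1 : θ - 1 = (1 - γ * ψ) / (ψ - 1) := by
    rw [hθ]; field_simp; ring
  have hθ1 : θ - 1 ≠ 0 := by
    rw [hθm1]
    exact div_ne_zero (by nlinarith) hψm
  have hθ0 : θ ≠ 0 := by
    rw [hθ]; exact div_ne_zero h1γ h1ψ
  set C : ℝ := (1 - γ) * v with hCdef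
  have hC : 0 < C := hv
  set p : ℝ := (1 - θ) / γ with hpdef
  set q : ℝ := γ * (ψ - 1) / (γ - 1) with hqdef
  set u : ℝ := δ ^ ψ * d ^ (1 - ψ) * C ^ q with hudef
  have hu : 0 < u := by
    have h1 : (0:ℝ) < δ ^ ψ := Real.rpow_pos_of_pos hδ ψ
    have h2 : (0:ℝ) < d ^ (1 - ψ) := Real.rpow_pos_of_pos hd (1 - ψ)
    have h3 : (0:ℝ) < C ^ q := Real.rpow_pos_of_pos hC q
    positivity
  have hp_eq : p = (γ * ψ - 1) / (γ * (ψ - 1)) := by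
    rw [hpdef, hθ]; field_simp; ring
  have hpγ : θ - 1 = -(p * γ) := by
    rw [hpdef]; field_simp; ring
  -- exponent identities
  have E1 : θ / γ + ψ * p = ψ := by
    rw [hpdef, hθ]; field_simp; ring
  have E2 : (γ - 1) / γ + (1 - ψ) * p = 1 - ψ := by
    rw [hpdef, hθ]; field_simp; ring
  have E3 : q * p = 1 + q := by
    rw [hpdef, hqdef, hθ]; field_simp; ring
  have E4 : 1 - γ * ψ / θ = 1 + q := by
    rw [hqdef, hθ]; field_simp; ring
  have hup : u ^ p = δ ^ (ψ * p) * d ^ ((1 - ψ) * p) * C ^ (q * p) := by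
    rw [hudef, Real.mul_rpow (by positivity) (by positivity),
      Real.mul_rpow (by positivity) (by positivity),
      ← Real.rpow_mul hδ.le, ← Real.rpow_mul hd.le, ← Real.rpow_mul hC.le]
  have hfoc : δ ^ (θ / γ) * (γ / (1 - γ)) * d ^ ((γ - 1) / γ) * u ^ p = γ * v * u := by
    rw [hup]
    have h : δ ^ (θ / γ) * (γ / (1 - γ)) * d ^ ((γ - 1) / γ)
          * (δ ^ (ψ * p) * d ^ ((1 - ψ) * p) * C ^ (q * p))
        = γ / (1 - γ) * (δ ^ (θ / γ) * δ ^ (ψ * p))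
            * (d ^ ((γ - 1) / γ) * d ^ ((1 - ψ) * p)) * C ^ (q * p) := by ring
    rw [h, ← Real.rpow_add hδ, ← Real.rpow_add hd, E1, E2, E3,
      Real.rpow_add hC 1 q, Real.rpow_one, hudef, hCdef]
    field_simp
  have hval : δ ^ ψ * (d ^ (1 - ψ) / (ψ - 1)) * C ^ (1 - γ * ψ / θ) - δ * θ * v
      = δ ^ (θ / γ) * (γ / (1 - γ)) * d ^ ((γ - 1) / γ) * u ^ p
        - (δ * θ - (θ - 1) * u) * v := by
    rw [E4, Real.rpow_add hC 1 q, Real.rpow_one, hfoc]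
    have hsum : (γ + (θ - 1)) * (ψ - 1) = 1 - γ := by
      rw [hθ]; field_simp; ring
    rw [hudef, hCdef]
    field_simp
    linear_combination (-(δ ^ ψ * d ^ (1 - ψ) * ((1 - γ) * v) ^ q * v)) * hsum
  constructor
  · refine ⟨δ * θ - (θ - 1) * u, ?_, ?_⟩
    · have harg : (δ * θ - (δ * θ - (θ - 1) * u)) / (θ - 1) = u := by
        rw [show δ * θ - (δ * θ - (θ - 1) * u) = (θ - 1) * u by ring]
        exact mul_div_cancel_left₀ u hθ1
      rw [harg]; exact hu
    · have harg : (δ * θ - (δ * θ - (θ - 1) * u)) / (θ - 1) = u := by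
        rw [show δ * θ - (δ * θ - (θ - 1) * u) = (θ - 1) * u by ring]
        exact mul_div_cancel_left₀ u hθ1
      rw [harg]
      exact hval
  · intro y hy
    obtain ⟨ν, hwpos, rfl⟩ := hy
    set w : ℝ := (δ * θ - ν) / (θ - 1) with hwdef
    have hν : ν = δ * θ - (θ - 1) * w := by
      rw [hwdef]; field_simp; ring
    set t : ℝ := w / u with htdef
    have ht : 0 < t := div_pos hwpos hu
    have hwt : w = u * t := by
      rw [htdef, mul_comm u (w / u), div_mul_cancel₀ w (ne_of_gt hu)]
    have hwp : w ^ p = u ^ p * t ^ p := by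
      rw [hwt, Real.mul_rpow hu.le ht.le]
    rw [hval, hwp]
    have e1 : δ ^ (θ / γ) * (γ / (1 - γ)) * d ^ ((γ - 1) / γ) * (u ^ p * t ^ p)
        = γ * v * u * t ^ p := by
      calc δ ^ (θ / γ) * (γ / (1 - γ)) * d ^ ((γ - 1) / γ) * (u ^ p * t ^ p)
          = δ ^ (θ / γ) * (γ / (1 - γ)) * d ^ ((γ - 1) / γ) * u ^ p * t ^ p := by ring
        _ = γ * v * u * t ^ p := by rw [hfoc]
    rw [e1, hν, hfoc, hwt]
    have hv' : 0 < (1 - γ) * v := hC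
    clear_value t w u q p C
    clear hwt hwp e1 hν hwdef htdef hudef hup hfoc hval E1 E2 E3 E4 hqdef hCdef hθm1 hθ hpdef hwpos hv hC
    -- goal : γ*v*u*t^p - (δθ - (θ-1)*(u*t))*v ≤ γ*v*u - (δθ - (θ-1)*u)*v
    have hfactor : γ * v * u * t ^ p - (δ * θ - (θ - 1) * (u * t)) * v
        - (γ * v * u - (δ * θ - (θ - 1) * u) * v)
        = (γ * v * u) * (t ^ p - (1 + p * (t - 1))) := by
      linear_combination (u * t * v - u * v) * hpγ
    have hkey : (γ * v * u) * (t ^ p - (1 + p * (t - 1))) ≤ 0 := by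
      rcases lt_or_gt_of_ne hγ1 with hlt | hgt
      · -- γ < 1 : v > 0, 0 ≤ p ≤ 1
        have hvpos : 0 < v := by nlinarith
        have hψgt : 1 < ψ := by nlinarith
        have hp0 : 0 ≤ p := by
          rw [hp_eq]
          exact div_nonneg (by nlinarith) (by nlinarith)
        have hp1 : p ≤ 1 := by
          rw [hp_eq, div_le_one (by nlinarith)]
          nlinarith
        have hb := bern_le ht hp0 hp1
        have ha : 0 ≤ γ * v * u := le_of_lt (mul_pos (mul_pos hγ hvpos) hu)
        exact mul_nonpos_of_nonneg_of_nonpos ha (by linarith)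
      · -- γ > 1 : v < 0
        have hvneg : v < 0 := by nlinarith
        have ha : γ * v * u ≤ 0 :=
          le_of_lt (mul_neg_of_neg_of_pos (mul_neg_of_pos_of_neg hγ hvneg) hu)
        have hp : p ≤ 0 ∨ 1 ≤ p := by
          rcases lt_or_gt_of_ne hψ1 with hψlt | hψgt
          · left
            rw [hp_eq]
            exact div_nonpos_of_nonneg_of_nonpos (by nlinarith) (by nlinarith)
          · right
            rw [hp_eq, le_div_iff₀ (by nlinarith)]
            nlinarith
        have hb := bern_ge ht hp
        exact mul_nonpos_of_nonpos_of_nonneg ha (by linarith)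
    linarith [hfactor, hkey]
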